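/- Let λ be an n-core and w the minimal-length coset representative with λ = w∅, and for each positive root α let k_{w,α} = ⌊⟨w^{-1}(ρ/n), α⟩⌋ be the Shi coordinate of the alcove w^{-1}A_0. Then Σ_{i=1}^{n−1} k_{w, α_{i,n−1}} = λ_1. -/

import Mathlib

open Finset

namespace Shi

/-- Number of boxes in column `j` (0-indexed) of the partition `lam` with `ℓ` positive parts:
the conjugate partition. -/
def conjP (lam : ℕ → ℕ) (ℓ j : ℕ) : ℕ := ((Finset.range ℓ).filter (fun i => j < lam i)).card

/-- Hook length of the (0-indexed) box `(i, j)` of the partition `lam` having `ℓ` positive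
parts. -/
def hookP (lam : ℕ → ℕ) (ℓ i j : ℕ) : ℤ :=
  (lam i : ℤ) - j + conjP lam ℓ j - i - 1

/-- `lam : ℕ → ℕ` (0-indexed, weakly decreasing, exactly `ℓ` positive parts) is an `n`-core:
no hook length is divisible by `n`. -/
def IsCore (n : ℕ) (lam : ℕ → ℕ) (ℓ : ℕ) : Prop :=
  Antitone lam ∧ (∀ i, 0 < lam i ↔ i < ℓ) ∧
    ∀ i j, i < ℓ → j < lam i → ¬ ((n : ℤ) ∣ hookP lam ℓ i j)

/-- The `k`-th β-number (first column hook length) of `lam`, 0-indexed. -/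
def betaP (lam : ℕ → ℕ) (ℓ k : ℕ) : ℤ := (lam k : ℤ) + ℓ - k - 1

/-- `x` is a bead of the original abacus of `lam`: a negative integer or a β-number. -/
def IsBead (lam : ℕ → ℕ) (ℓ : ℕ) (x : ℤ) : Prop := x < 0 ∨ ∃ k < ℓ, betaP lam ℓ k = x

/-- The vector `ρ = ((n-1)/2, (n-1)/2 - 1, …, (1-n)/2)`, half the sum of positive roots. -/
noncomputable def rhoV (n : ℕ) : Fin n → ℝ := fun i => ((n : ℝ) - 1) / 2 - ((i : ℕ) : ℝ)

/-- `w⁻¹(v)` for the affine transformation `w = t_a ∘ u` (translation by `a` after the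
permutation `u`), i.e. `w⁻¹(v) = u⁻¹ · (v - a)`. -/
noncomputable def winv (n : ℕ) (u : Equiv.Perm (Fin n)) (a : Fin n → ℤ) (v : Fin n → ℝ) : Fin n → ℝ :=
  fun i => v (u i) - (a (u i) : ℝ)

/-- `u` is the minimal length permutation sorting `-a` into antidominant position, i.e.
`a ∘ u` is weakly increasing and ties are broken stably; this is the finite part of the
minimal length coset representative `w = t_a u`. -/
def SortsMin {n : ℕ} (u : Equiv.Perm (Fin n)) (a : Fin n → ℤ) : Prop :=
  ∀ i j : Fin n, i < j → a (u i) < a (u j) ∨ (a (u i) = a (u j) ∧ u i < u j)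

/-- `a` is the vector of level numbers of the balanced abacus of `lam`: for some shift `c`
of the original abacus, the beads on runner `i` occupy exactly the levels `< a i`, and the
balance number is `0`. -/
def BalancedLevels (n : ℕ) (lam : ℕ → ℕ) (ℓ : ℕ) (a : Fin n → ℤ) : Prop :=
  (∑ i, a i) = 0 ∧ ∃ c : ℤ, ∀ i : Fin n, ∀ q : ℤ,
    IsBead lam ℓ (q * n + ((i : ℕ) : ℤ) - c) ↔ q < a i

private lemma shi_decomp {n : ℕ} (hn : (0:ℤ) < (n:ℤ)) (q r : ℤ) (h0 : 0 ≤ r) (h1 : r < n) :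
    (q * n + r) / (n:ℤ) = q ∧ (q * n + r) % (n:ℤ) = r := by
  constructor
  · rw [add_comm, Int.add_mul_ediv_right _ _ hn.ne', Int.ediv_eq_zero_of_lt h0 h1, zero_add]
  · rw [add_comm, Int.add_mul_emod_self_right, Int.emod_eq_of_lt h0 h1]

private lemma shi_hermite (n : ℕ) (hn : 0 < n) (c : ℤ) :
    (∑ j ∈ Finset.range n, (c + (j:ℤ)) / (n:ℤ)) = c := by
  have hne : (n:ℤ) ≠ 0 := by exact_mod_cast hn.ne'
  have step : ∀ d : ℤ, (∑ j ∈ Finset.range n, (d + 1 + (j:ℤ)) / (n:ℤ))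
      = (∑ j ∈ Finset.range n, (d + (j:ℤ)) / (n:ℤ)) + 1 := by
    intro d
    have h0 : (∑ j ∈ Finset.range (n+1), (d + (j:ℤ)) / (n:ℤ))
        = (∑ j ∈ Finset.range n, (d + 1 + (j:ℤ)) / (n:ℤ)) + d / (n:ℤ) := by
      rw [Finset.sum_range_succ' (fun j => (d + (j:ℤ)) / (n:ℤ)) n]
      simp only [Nat.cast_zero, add_zero]
      congr 1
      refine Finset.sum_congr rfl fun j _ => ?_
      congr 1
      push_cast
      ring
    have h1 := Finset.sum_range_succ (fun j => (d + (j:ℤ)) / (n:ℤ)) n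
    have h2 : (d + (n:ℤ)) / (n:ℤ) = d / (n:ℤ) + 1 := by
      simpa using Int.add_mul_ediv_right d 1 hne
    linarith [h0, h1, h2]
  induction c using Int.induction_on with
  | zero =>
    refine Finset.sum_eq_zero fun j hj => ?_
    rw [zero_add]
    exact Int.ediv_eq_zero_of_lt (by positivity) (by exact_mod_cast Finset.mem_range.mp hj)
  | succ k ih => rw [step (k:ℤ), ih]
  | pred k ih =>
    have h := step (-(k:ℤ) - 1)
    have h' : (∑ j ∈ Finset.range n, (-(k:ℤ) - 1 + 1 + (j:ℤ)) / (n:ℤ))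
        = (∑ j ∈ Finset.range n, (-(k:ℤ) + (j:ℤ)) / (n:ℤ)) := by
      refine Finset.sum_congr rfl fun j _ => ?_; ring_nf
    rw [h', ih] at h
    linarith [h]

set_option maxHeartbeats 1000000 in
/-- the sum of the Shi coordinates `k_{w,α_{i,n-1}}` of the alcove
`w⁻¹A_0` over `1 ≤ i ≤ n-1` equals `λ_1`. -/
theorem col_coord_sum (n : ℕ) (hn : 2 ≤ n) (lam : ℕ → ℕ) (ℓ : ℕ)
    (hcore : IsCore n lam ℓ) (a : Fin n → ℤ) (hbal : BalancedLevels n lam ℓ a)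
    (u : Equiv.Perm (Fin n)) (hu : SortsMin u a) :
    (∑ i : Fin (n - 1),
      ⌊winv n u a (fun t => rhoV n t / n) (Fin.castLE (by omega) i) -
        winv n u a (fun t => rhoV n t / n) ⟨n - 1, by omega⟩⌋) = (lam 0 : ℤ) := by
  obtain ⟨hA, hpos, -⟩ := hcore
  obtain ⟨hsum, c, hbead⟩ := hbal
  have hn0 : (0:ℤ) < (n:ℤ) := by exact_mod_cast (by omega : 0 < n)
  have hnne : (n:ℤ) ≠ 0 := hn0.ne'
  -- beta facts
  have hblt : ∀ k k' : ℕ, k < k' → betaP lam ℓ k' < betaP lam ℓ k := by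
    intro k k' h
    have h2 : lam k' ≤ lam k := hA h.le
    simp only [betaP]
    omega
  have hbinj : ∀ k k' : ℕ, betaP lam ℓ k = betaP lam ℓ k' → k = k' := by
    intro k k' h
    rcases lt_trichotomy k k' with h' | h' | h'
    · exact absurd h (hblt k k' h').ne'
    · exact h'
    · exact absurd h (hblt k' k h').ne
  have hbnn : ∀ k, k < ℓ → 0 ≤ betaP lam ℓ k := by
    intro k hk; simp only [betaP]; omega
  -- maximal bead
  set M : ℤ := (lam 0 : ℤ) + (ℓ:ℤ) - 1 with hMdef
  have hMbead : IsBead lam ℓ M := by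
    rcases Nat.eq_zero_or_pos ℓ with h | h
    · left
      have h0 : ¬ 0 < lam 0 := by rw [hpos 0]; omega
      simp only [hMdef]; omega
    · exact Or.inr ⟨0, h, by simp [betaP, hMdef]⟩
  have hMmax : ∀ x : ℤ, M < x → ¬ IsBead lam ℓ x := by
    intro x hx hb
    rcases hb with h | ⟨k, hk, hb⟩
    · simp only [hMdef] at hx; omega
    · have h1 : lam k ≤ lam 0 := hA (Nat.zero_le k)
      simp only [betaP] at hb
      simp only [hMdef] at hx
      omega
  -- threshold function for each runner
  set t : Fin n → ℤ := fun i => -((((i:ℕ):ℤ) - c) / (n:ℤ)) with htdef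
  have ht : ∀ i : Fin n, 0 ≤ t i * n + ((i:ℕ):ℤ) - c ∧ t i * n + ((i:ℕ):ℤ) - c < n := by
    intro i
    have h1 := Int.mul_ediv_add_emod ((((i:ℕ):ℤ)) - c) (n:ℤ)
    have h2 := Int.emod_nonneg ((((i:ℕ):ℤ)) - c) hnne
    have h3 := Int.emod_lt_of_pos ((((i:ℕ):ℤ)) - c) hn0
    simp only [htdef]
    constructor <;> nlinarith [h1, h2, h3]
  have hsumt : (∑ i : Fin n, t i) = c := by
    have h1 : (∑ i : Fin n, t i) = -∑ i : Fin n, ((((i:ℕ):ℤ)) - c) / (n:ℤ) := by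
      rw [← Finset.sum_neg_distrib]
    have h2 : (∑ i : Fin n, ((((i:ℕ):ℤ)) - c) / (n:ℤ))
        = ∑ j ∈ Finset.range n, (-c + (j:ℤ)) / (n:ℤ) := by
      rw [← Fin.sum_univ_eq_sum_range (fun j => (-c + (j:ℤ)) / (n:ℤ)) n]
      refine Finset.sum_congr rfl fun i _ => ?_
      congr 1
      ring
    rw [h1, h2, shi_hermite n (by omega) (-c)]
    ring
  have hta : ∀ i : Fin n, t i ≤ a i := by
    intro i
    have hneg : (t i - 1) * n + ((i:ℕ):ℤ) - c < 0 := by nlinarith [(ht i).1, (ht i).2]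
    have hb : IsBead lam ℓ ((t i - 1) * n + ((i:ℕ):ℤ) - c) := Or.inl hneg
    have := (hbead i (t i - 1)).mp hb
    omega
  -- counting beta-numbers on the abacus gives c = -ℓ
  have hfin : ∀ x : ℤ, ((x + c) % (n:ℤ)).toNat < n := by
    intro x
    have h2 := Int.emod_nonneg (x + c) hnne
    have h3 := Int.emod_lt_of_pos (x + c) hn0
    omega
  have hcard : (Finset.range ℓ).card
      = ((Finset.univ : Finset (Fin n)).sigma fun i => Finset.Ico (t i) (a i)).card := by
    refine Finset.card_bij
      (fun k _ => ⟨⟨((betaP lam ℓ k + c) % (n:ℤ)).toNat, hfin _⟩, (betaP lam ℓ k + c) / (n:ℤ)⟩)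
      ?_ ?_ ?_
    · -- maps into the sigma set
      intro k hk
      rw [Finset.mem_range] at hk
      set x := betaP lam ℓ k with hx
      have hrec : (x + c) / (n:ℤ) * n + ((((x + c) % (n:ℤ)).toNat : ℕ) : ℤ) - c = x := by
        have h1 := Int.mul_ediv_add_emod (x + c) (n:ℤ)
        have h2 := Int.emod_nonneg (x + c) hnne
        have h4 : ((((x + c) % (n:ℤ)).toNat : ℕ) : ℤ) = (x + c) % (n:ℤ) :=
          Int.toNat_of_nonneg h2
        rw [h4]; linarith
      have hxb : IsBead lam ℓ x := Or.inr ⟨k, hk, rfl⟩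
      have hxnn : 0 ≤ x := hbnn k hk
      set i : Fin n := ⟨((x + c) % (n:ℤ)).toNat, hfin _⟩ with hi
      have hqa : (x + c) / (n:ℤ) < a i := by
        refine (hbead i _).mp ?_
        have : ((i:ℕ):ℤ) = ((((x + c) % (n:ℤ)).toNat : ℕ) : ℤ) := rfl
        rw [this, hrec]
        exact hxb
      have hqt : t i ≤ (x + c) / (n:ℤ) := by
        by_contra hcon
        push_neg at hcon
        have h5 : (x + c) / (n:ℤ) ≤ t i - 1 := by omega
        have h6 : (x + c) / (n:ℤ) * n ≤ (t i - 1) * n :=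
          mul_le_mul_of_nonneg_right h5 hn0.le
        have h7 := (ht i).2
        nlinarith [hrec]
      simp only [Finset.mem_sigma, Finset.mem_univ, Finset.mem_Ico, true_and]
      exact ⟨hqt, hqa⟩
    · -- injective
      intro k1 hk1 k2 hk2 heq
      rw [Finset.mem_range] at hk1 hk2
      have h1 : ((betaP lam ℓ k1 + c) % (n:ℤ)).toNat = ((betaP lam ℓ k2 + c) % (n:ℤ)).toNat := by
        have := congrArg (fun p => ((p.1 : Fin n) : ℕ)) heq
        simpa using this
      have h2 : (betaP lam ℓ k1 + c) / (n:ℤ) = (betaP lam ℓ k2 + c) / (n:ℤ) := by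
        have := congrArg (fun p => (p.2 : ℤ)) heq
        simpa using this
      have h3 : betaP lam ℓ k1 = betaP lam ℓ k2 := by
        have e1 := Int.mul_ediv_add_emod (betaP lam ℓ k1 + c) (n:ℤ)
        have e2 := Int.mul_ediv_add_emod (betaP lam ℓ k2 + c) (n:ℤ)
        have m1 := Int.emod_nonneg (betaP lam ℓ k1 + c) hnne
        have m2 := Int.emod_nonneg (betaP lam ℓ k2 + c) hnne
        have h4 : (betaP lam ℓ k1 + c) % (n:ℤ) = (betaP lam ℓ k2 + c) % (n:ℤ) := by omega
        rw [h2, h4] at e1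
        omega
      exact hbinj _ _ h3
    · -- surjective
      rintro ⟨i, q⟩ hmem
      simp only [Finset.mem_sigma, Finset.mem_univ, Finset.mem_Ico, true_and] at hmem
      obtain ⟨hq1, hq2⟩ := hmem
      set x : ℤ := q * n + ((i:ℕ):ℤ) - c with hxdef
      have hxb : IsBead lam ℓ x := (hbead i q).mpr hq2
      have hxnn : 0 ≤ x := by
        have h6 : t i * n ≤ q * n := mul_le_mul_of_nonneg_right hq1 hn0.le
        have := (ht i).1
        simp only [hxdef]
        linarith
      rcases hxb with h | ⟨k, hk, hbk⟩
      · omega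
      refine ⟨k, Finset.mem_range.mpr hk, ?_⟩
      have hic : 0 ≤ ((i:ℕ):ℤ) := by positivity
      have hin : ((i:ℕ):ℤ) < n := by exact_mod_cast i.isLt
      have hdec := shi_decomp hn0 q ((i:ℕ):ℤ) hic hin
      have hxc : x + c = q * n + ((i:ℕ):ℤ) := by simp only [hxdef]; ring
      have hq : (betaP lam ℓ k + c) / (n:ℤ) = q := by rw [hbk, hxc]; exact hdec.1
      have hr : (betaP lam ℓ k + c) % (n:ℤ) = ((i:ℕ):ℤ) := by rw [hbk, hxc]; exact hdec.2
      refine Sigma.ext ?_ (heq_of_eq ?_)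
      · apply Fin.ext
        simp only [hr]
        omega
      · exact hq
  have hc : c = -(ℓ:ℤ) := by
    have h1 : ((Finset.range ℓ).card : ℤ)
        = ∑ i : Fin n, (((Finset.Ico (t i) (a i)).card : ℕ) : ℤ) := by
      rw [hcard, Finset.card_sigma]
      push_cast
      rfl
    have h2 : ∀ i : Fin n, (((Finset.Ico (t i) (a i)).card : ℕ) : ℤ) = a i - t i :=
      fun i => Int.card_Ico_of_le _ _ (hta i)
    rw [Finset.sum_congr rfl (fun i _ => h2 i), Finset.sum_sub_distrib, hsum, hsumt,
      Finset.card_range] at h1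
    omega
  -- locate the maximal bead on the abacus
  set q' : ℤ := (M + c) / (n:ℤ) with hq'def
  set r' : ℤ := (M + c) % (n:ℤ) with hr'def
  have hr'0 : 0 ≤ r' := Int.emod_nonneg _ hnne
  have hr'n : r' < n := Int.emod_lt_of_pos _ hn0
  set m' : Fin n := ⟨r'.toNat, by omega⟩ with hm'def
  have hm'c : ((m':ℕ):ℤ) = r' := by
    simp only [hm'def]
    omega
  have hqm : q' * n + ((m':ℕ):ℤ) - c = M := by
    have h1 := Int.mul_ediv_add_emod (M + c) (n:ℤ)
    rw [hm'c]
    simp only [hq'def, hr'def] at *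
    linarith
  have h1 : q' < a m' := (hbead m' q').mp (by rw [hqm]; exact hMbead)
  have h2 : ∀ i : Fin n, a i ≤ q' + 1 := by
    intro i
    by_contra hcon
    push_neg at hcon
    have hb := (hbead i (q' + 1)).mpr hcon
    refine hMmax _ ?_ hb
    have hic : 0 ≤ ((i:ℕ):ℤ) := by positivity
    nlinarith [hqm, hm'c, hr'n]
  have h3 : ∀ i : Fin n, r' < ((i:ℕ):ℤ) → a i ≤ q' := by
    intro i hi
    by_contra hcon
    push_neg at hcon
    have hb := (hbead i q').mpr hcon
    refine hMmax _ ?_ hb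
    rw [← hqm]
    linarith [hm'c, hi]
  have ham' : a m' = q' + 1 := le_antisymm (h2 m') h1
  -- the permutation sends the top index to m'
  set last : Fin n := ⟨n - 1, by omega⟩ with hlastdef
  have hum : u last = m' := by
    by_contra hne
    have hj : u.symm m' ≠ last := by
      intro h
      exact hne (by rw [← h, Equiv.apply_symm_apply])
    have hlt : u.symm m' < last := by
      rw [Fin.lt_def]
      have h4 := (u.symm m').isLt
      have h5 : (u.symm m' : ℕ) ≠ n - 1 := by
        intro h
        exact hj (Fin.ext h)
      simp only [hlastdef]
      omega
    rcases hu _ _ hlt with h | ⟨hEq, hlt'⟩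
    · rw [Equiv.apply_symm_apply] at h
      have := h2 (u last)
      omega
    · rw [Equiv.apply_symm_apply] at hEq hlt'
      have hr'lt : r' < ((u last : ℕ):ℤ) := by
        rw [← hm'c]
        exact_mod_cast hlt'
      have := h3 (u last) hr'lt
      omega
  have hfinal : (lam 0 : ℤ) = (n:ℤ) * a (u last) + ((u last : ℕ):ℤ) - n + 1 := by
    rw [hum, ham', hm'c]
    simp only [hMdef] at hqm
    nlinarith [hqm, hc]
  -- the final sum computation
  have hle : n - 1 ≤ n := by omega
  set F : Fin n → ℤ := fun s => a (u last) - a s + (if s < u last then 0 else -1) with hFdef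
  have hnR : (0:ℝ) < (n:ℝ) := by exact_mod_cast hn0
  have hterm : ∀ i : Fin (n-1),
      ⌊winv n u a (fun t => rhoV n t / n) (Fin.castLE hle i) -
        winv n u a (fun t => rhoV n t / n) last⌋ = F (u (Fin.castLE hle i)) := by
    intro i
    set s : Fin n := u (Fin.castLE hle i) with hsdef
    have hsne : (s:ℕ) ≠ ((u last : Fin n):ℕ) := by
      intro h
      have h2 := u.injective (Fin.ext h : s = u last)
      have h3 := congrArg Fin.val h2
      have h4 := i.isLt
      simp only [hlastdef, Fin.castLE] at h3
      omega
    have hre : winv n u a (fun t => rhoV n t / n) (Fin.castLE hle i) -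
        winv n u a (fun t => rhoV n t / n) last
        = ((((u last : Fin n):ℕ):ℝ) - ((s:ℕ):ℝ)) / (n:ℝ)
          + (((a (u last) - a s : ℤ)):ℝ) := by
      simp only [winv, rhoV, ← hsdef]
      push_cast
      field_simp
      ring
    rw [hre, Int.floor_add_intCast]
    have hfl : ⌊((((u last : Fin n):ℕ):ℝ) - ((s:ℕ):ℝ)) / (n:ℝ)⌋
        = (if s < u last then (0:ℤ) else -1) := by
      have hulR : (((u last : Fin n):ℕ):ℝ) < (n:ℝ) := by exact_mod_cast (u last).isLt
      have hsR : (((s:ℕ)):ℝ) < (n:ℝ) := by exact_mod_cast s.isLt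
      have hs0 : (0:ℝ) ≤ ((s:ℕ):ℝ) := by positivity
      have hul0 : (0:ℝ) ≤ (((u last : Fin n):ℕ):ℝ) := by positivity
      rcases lt_or_gt_of_ne hsne with hlt | hgt
      · rw [if_pos (Fin.lt_def.mpr hlt)]
        have hltR : ((s:ℕ):ℝ) < (((u last : Fin n):ℕ):ℝ) := by exact_mod_cast hlt
        rw [Int.floor_eq_iff]
        constructor
        · push_cast
          exact div_nonneg (by linarith) hnR.le
        · push_cast
          rw [zero_add, div_lt_one hnR]
          linarith
      · rw [if_neg (by simp only [Fin.lt_def]; omega)]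
        have hgtR : (((u last : Fin n):ℕ):ℝ) < ((s:ℕ):ℝ) := by exact_mod_cast hgt
        rw [Int.floor_eq_iff]
        constructor
        · push_cast
          rw [le_div_iff₀ hnR]
          linarith
        · push_cast
          have hneg : (((u last : Fin n):ℕ):ℝ) - ((s:ℕ):ℝ) < 0 := by linarith
          have := div_neg_of_neg_of_pos hneg hnR
          linarith
    rw [hfl]
    simp only [hFdef]
    ring
  have hmap : (Finset.univ : Finset (Fin (n-1))).map
        ⟨Fin.castLE hle, Fin.castLE_injective hle⟩
      = (Finset.univ : Finset (Fin n)).erase last := by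
    ext s
    simp only [Finset.mem_map, Finset.mem_univ, true_and, Finset.mem_erase, and_true,
      Function.Embedding.coeFn_mk]
    constructor
    · rintro ⟨j, rfl⟩
      intro h
      have h2 := congrArg Fin.val h
      have h3 := j.isLt
      simp only [hlastdef, Fin.castLE] at h2
      omega
    · intro hne
      have hs := s.isLt
      have hv : (s:ℕ) ≠ n - 1 := by
        intro h
        exact hne (Fin.ext (by simp only [hlastdef]; exact h))
      exact ⟨⟨(s:ℕ), by omega⟩, Fin.ext rfl⟩
  have hFul : F (u last) = -1 := by
    simp [hFdef]
  have hsF : (∑ s : Fin n, F s) = (n:ℤ) * a (u last) + ((u last : Fin n):ℕ) - n := by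
    simp only [hFdef]
    rw [Finset.sum_add_distrib, Finset.sum_sub_distrib, hsum, Finset.sum_const,
      Finset.card_univ, Fintype.card_fin]
    have hite : (∑ s : Fin n, (if s < u last then (0:ℤ) else -1))
        = (((u last : Fin n):ℕ):ℤ) - n := by
      have h1 : ∀ s : Fin n, (if s < u last then (0:ℤ) else -1)
          = (if s < u last then (1:ℤ) else 0) - 1 := by
        intro s; split <;> ring
      rw [Finset.sum_congr rfl fun s _ => h1 s, Finset.sum_sub_distrib, Finset.sum_boole,
        Finset.sum_const, Finset.card_univ, Fintype.card_fin]
      have h2 : (Finset.univ.filter fun s : Fin n => s < u last) = Finset.Iio (u last) := by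
        ext x
        simp [Finset.mem_Iio]
      rw [h2, Fin.card_Iio]
      push_cast
      ring
    rw [hite]
    push_cast
    ring
  calc (∑ i : Fin (n-1),
      ⌊winv n u a (fun t => rhoV n t / n) (Fin.castLE hle i) -
        winv n u a (fun t => rhoV n t / n) last⌋)
      = ∑ i : Fin (n-1), F (u (Fin.castLE hle i)) :=
        Finset.sum_congr rfl fun i _ => hterm i
    _ = ∑ s ∈ (Finset.univ : Finset (Fin n)).erase last, F (u s) := by
        rw [← hmap, Finset.sum_map]
        rfl
    _ = (∑ s : Fin n, F (u s)) - F (u last) := by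
        rw [← Finset.sum_erase_add Finset.univ _ (Finset.mem_univ last)]
        ring
    _ = (∑ s : Fin n, F s) - F (u last) := by rw [Equiv.sum_comp u F]
    _ = (lam 0 : ℤ) := by
        rw [hsF, hFul, hfinal]
        ring

end Shi
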